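/- Let α and t be positive integers, and let G be a finite simple graph with no clique of size t and no stable (independent) set of size α. Then G has fewer than t^(α−1) vertices. -/
import Mathlib

open Finset

theorem stmt2 {V : Type*} [Fintype V] (G : SimpleGraph V)
    (α t : ℕ) (hα : 1 ≤ α) (ht : 1 ≤ t)
    (hclique : ¬ ∃ K : Finset V, G.IsNClique t K)
    (hstable : ¬ ∃ S : Finset V, S.card = α ∧
      ∀ u ∈ S, ∀ v ∈ S, u ≠ v → ¬ G.Adj u v) :
    Fintype.card V < t ^ (α - 1) := by
  classical
  suffices h : ∀ n t α, 1 ≤ α → 1 ≤ t → t + α ≤ n →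
      ∀ A : Finset V, (¬ ∃ K ⊆ A, G.IsNClique t K) →
      (¬ ∃ S ⊆ A, S.card = α ∧ ∀ u ∈ S, ∀ v ∈ S, u ≠ v → ¬ G.Adj u v) →
      A.card < t ^ (α - 1) by
    have := h (t + α) t α hα ht le_rfl univ
      (by rintro ⟨K, _, hK⟩; exact hclique ⟨K, hK⟩)
      (by rintro ⟨S, _, hS⟩; exact hstable ⟨S, hS⟩)
    simpa [Finset.card_univ] using this
  intro n
  induction n with
  | zero => intro t α hα ht h; omega
  | succ n ih =>
    intro t α hα ht hn A hcl hst
    rcases Nat.lt_or_ge t 2 with ht1 | ht2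
    · -- t = 1 : A must be empty
      have h1 : t = 1 := by omega
      subst h1
      have hA : A = ∅ := by
        by_contra hne
        obtain ⟨v, hv⟩ := Finset.nonempty_iff_ne_empty.2 hne
        refine hcl ⟨{v}, by simpa using hv, ?_⟩
        constructor
        · intro a ha b hb hab
          rw [Finset.coe_singleton, Set.mem_singleton_iff] at ha hb
          exact absurd (ha.trans hb.symm) hab
        · simp
      simp [hA]
    rcases Nat.lt_or_ge α 2 with hα1 | hα2
    · -- α = 1 : A must be empty
      have h1 : α = 1 := by omega
      subst h1
      have hA : A = ∅ := by
        by_contra hne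
        obtain ⟨v, hv⟩ := Finset.nonempty_iff_ne_empty.2 hne
        refine hst ⟨{v}, by simpa using hv, by simp, ?_⟩
        intro u hu w hw huw
        rw [Finset.mem_singleton] at hu hw
        exact absurd (hu.trans hw.symm) huw
      simp [hA]
    obtain ⟨s, rfl⟩ : ∃ s, t = s + 2 := ⟨t - 2, by omega⟩
    obtain ⟨a, rfl⟩ : ∃ a, α = a + 2 := ⟨α - 2, by omega⟩
    rcases A.eq_empty_or_nonempty with rfl | ⟨v, hv⟩
    · simp
    set N : Finset V := A.filter (fun u => G.Adj v u) with hNdef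
    set M : Finset V := A.filter (fun u => u ≠ v ∧ ¬ G.Adj v u) with hMdef
    have hNA : N ⊆ A := filter_subset _ _
    have hMA : M ⊆ A := filter_subset _ _
    have hvN : v ∉ N := by simp [hNdef]
    have hvM : v ∉ M := by simp [hMdef]
    have hNM : Disjoint N M := by
      rw [Finset.disjoint_left]
      intro u huN huM
      simp [hNdef, hMdef] at huN huM
      exact huM.2.2 huN.2
    have hAeq : A = insert v (N ∪ M) := by
      ext u
      simp only [Finset.mem_insert, Finset.mem_union, hNdef, hMdef, Finset.mem_filter]
      constructor
      · intro hu
        by_cases huv : u = v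
        · exact Or.inl huv
        · by_cases hadj : G.Adj v u
          · exact Or.inr (Or.inl ⟨hu, hadj⟩)
          · exact Or.inr (Or.inr ⟨hu, huv, hadj⟩)
      · rintro (rfl | ⟨h, _⟩ | ⟨h, _⟩) <;> [exact hv; exact h; exact h]
    have hcard : A.card = N.card + M.card + 1 := by
      rw [hAeq, Finset.card_insert_of_notMem (by simp [hvN, hvM]),
        Finset.card_union_of_disjoint hNM]
    -- neighbors: no (s+1)-clique, no (a+2)-stable set
    have hN : N.card < (s + 1) ^ (a + 2 - 1) := by
      refine ih (s + 1) (a + 2) (by omega) (by omega) (by omega) N ?_ ?_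
      · rintro ⟨K, hKN, hK⟩
        refine hcl ⟨insert v K, ?_, ?_⟩
        · intro u hu
          rcases Finset.mem_insert.1 hu with rfl | hu
          · exact hv
          · exact hNA (hKN hu)
        · have hvK : v ∉ K := fun h => hvN (hKN h)
          have : G.IsNClique (s + 1 + 1) (insert v K) := by
            refine hK.insert ?_
            intro b hb
            have := hKN hb
            simp [hNdef] at this
            exact this.2
          simpa using this
      · rintro ⟨S, hSN, hS⟩
        exact hst ⟨S, hSN.trans hNA, hS⟩
    -- non-neighbors: no (s+2)-clique, no (a+1)-stable set
    have hM : M.card < (s + 2) ^ (a + 1 - 1) := by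
      refine ih (s + 2) (a + 1) (by omega) (by omega) (by omega) M ?_ ?_
      · rintro ⟨K, hKM, hK⟩
        exact hcl ⟨K, hKM.trans hMA, hK⟩
      · rintro ⟨S, hSM, hScard, hSst⟩
        have hvS : v ∉ S := fun h => hvM (hSM h)
        refine hst ⟨insert v S, ?_, ?_, ?_⟩
        · intro u hu
          rcases Finset.mem_insert.1 hu with rfl | hu
          · exact hv
          · exact hMA (hSM hu)
        · rw [Finset.card_insert_of_notMem hvS, hScard]
        · intro u hu w hw huw
          have hMfact : ∀ x ∈ S, x ≠ v ∧ ¬ G.Adj v x := by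
            intro x hx
            have := hSM hx
            simp [hMdef] at this
            exact ⟨this.2.1, this.2.2⟩
          rcases Finset.mem_insert.1 hu with hu1 | hu2 <;>
            rcases Finset.mem_insert.1 hw with hw1 | hw2
          · exact absurd (hu1.trans hw1.symm) huw
          · rw [hu1]
            exact (hMfact w hw2).2
          · rw [hw1]
            intro hadj
            exact (hMfact u hu2).2 hadj.symm
          · exact hSst u hu2 w hw2 huw
    have e1 : a + 2 - 1 = a + 1 := by omega
    have e2 : a + 1 - 1 = a := by omega
    rw [e1] at hN ⊢
    rw [e2] at hM
    have key : (s + 1) ^ (a + 1) + (s + 2) ^ a ≤ (s + 2) ^ (a + 1) := by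
      have h1 : (s + 1) ^ (a + 1) ≤ (s + 1) * (s + 2) ^ a := by
        calc (s + 1) ^ (a + 1) = (s + 1) * (s + 1) ^ a := by ring
          _ ≤ (s + 1) * (s + 2) ^ a := by gcongr <;> omega
      calc (s + 1) ^ (a + 1) + (s + 2) ^ a ≤ (s + 1) * (s + 2) ^ a + (s + 2) ^ a := by omega
        _ = (s + 2) ^ (a + 1) := by ring
    omega
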